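/- Let X be a strictly convex real Banach space (i.e. ‖x‖ = ‖y‖ = 1 and ‖x + y‖ = 2 imply x = y). Let Z := X × c₀(ℕ), define Φ(x, y) = ‖x‖ + Σ_{n=1}^∞ (y_n)^{2n} for (x, y) ∈ Z, and let |||z||| := inf{ λ > 0 : Φ(z/λ) ≤ 1 }. Then the norm |||·||| on Z is strictly convex: if z, w ∈ Z satisfy |||z||| = |||w||| = 1 and |||z + w||| = 2, then z = w. -/

import Mathlib

open Filter

/-- Membership in `c₀(ℕ)`: sequences converging to `0`. -/
def IsC0Seq (y : ℕ → ℝ) : Prop := Filter.Tendsto y Filter.atTop (nhds 0)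

lemma c0_summable {y : ℕ → ℝ} (hy : IsC0Seq y) :
    Summable fun n => (y n) ^ (2 * (n + 1)) := by
  have hev : ∀ᶠ n in atTop, |y n| ≤ 1/2 := by
    have := hy.eventually (Metric.ball_mem_nhds (0:ℝ) (by norm_num : (0:ℝ) < 1/2))
    filter_upwards [this] with n hn
    simpa [Real.dist_eq, abs_nonneg] using le_of_lt hn
  refine summable_of_isBigO_nat (summable_geometric_of_lt_one (by norm_num) (by norm_num : (1/2:ℝ) < 1)) ?_
  refine Asymptotics.IsBigO.of_bound 1 ?_
  filter_upwards [hev] with n hn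
  have h1 : |y n ^ (2 * (n + 1))| = |y n| ^ (2 * (n + 1)) := by
    rw [abs_pow]
  have h2 : |y n| ^ (2 * (n + 1)) ≤ (1/2 : ℝ) ^ (2 * (n + 1)) :=
    pow_le_pow_left₀ (abs_nonneg _) hn _
  have h3 : (1/2 : ℝ) ^ (2 * (n + 1)) ≤ (1/2 : ℝ) ^ n :=
    pow_le_pow_of_le_one (by norm_num) (by norm_num) (by omega)
  simp only [Real.norm_eq_abs, one_mul]
  calc |y n ^ (2 * (n + 1))| ≤ (1/2:ℝ)^n := by rw [h1]; linarith
    _ ≤ |(1/2:ℝ)^n| := le_abs_self _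

lemma c0_abs {y : ℕ → ℝ} (hy : IsC0Seq y) : IsC0Seq fun n => |y n| := by
  simpa [IsC0Seq] using hy.abs

lemma c0_const_mul {y : ℕ → ℝ} (hy : IsC0Seq y) (c : ℝ) : IsC0Seq fun n => c * y n := by
  simpa [IsC0Seq] using hy.const_mul c

lemma c0_add {y y' : ℕ → ℝ} (hy : IsC0Seq y) (hy' : IsC0Seq y') :
    IsC0Seq fun n => y n + y' n := by
  simpa [IsC0Seq] using hy.add hy'

lemma c0_tsum_cont {y : ℕ → ℝ} (hy : IsC0Seq y) (t₀ : ℝ) :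
    ContinuousAt (fun t : ℝ => ∑' n, (t * y n) ^ (2 * (n + 1))) t₀ := by
  set R : ℝ := |t₀| + 1 with hR
  have hR0 : 0 < R := by positivity
  set c : ℝ → ℝ := fun t => max (-R) (min R t) with hc
  have hcont : Continuous c := by
    exact continuous_const.max (continuous_const.min continuous_id)
  have hcb : ∀ t, |c t| ≤ R := by
    intro t
    rw [abs_le]
    constructor
    · exact le_max_left _ _
    · exact max_le (by linarith) (min_le_left _ _)
  have hbd : Summable fun n => (R * |y n|) ^ (2 * (n + 1)) :=
    c0_summable (c0_const_mul (c0_abs hy) R)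
  have hg : Continuous fun t => ∑' n, (c t * y n) ^ (2 * (n + 1)) := by
    refine continuous_tsum (fun n => ?_) hbd (fun n t => ?_)
    · exact ((hcont.mul continuous_const).pow _)
    · rw [Real.norm_eq_abs, abs_pow, abs_mul]
      refine pow_le_pow_left₀ (by positivity) ?_ _
      exact mul_le_mul_of_nonneg_right (hcb t) (abs_nonneg _)
  refine hg.continuousAt.congr ?_
  have hmem : {t : ℝ | |t| < R} ∈ nhds t₀ := by
    refine IsOpen.mem_nhds ?_ (by simp [hR])
    simpa using isOpen_lt continuous_abs continuous_const
  filter_upwards [hmem] with t ht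
  have : c t = t := by
    simp only [Set.mem_setOf_eq, abs_lt] at ht
    rw [hc]
    simp only [min_eq_right (le_of_lt ht.2), max_eq_right (by linarith : -R ≤ t)]
  rw [this]

/-- The function `Φ(x, y) = ‖x‖ + Σ_{n=1}^∞ y_n^{2n}` on `Z = X × c₀(ℕ)`, where the
Lean coordinate `n : ℕ` plays the role of the paper's coordinate `n + 1`. -/
noncomputable def PhiZ {X : Type*} [NormedAddCommGroup X] (z : X × (ℕ → ℝ)) : ℝ :=
  ‖z.1‖ + ∑' n : ℕ, (z.2 n) ^ (2 * (n + 1))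

/-- The Minkowski functional `|||z||| = inf { λ > 0 : Φ(z/λ) ≤ 1 }` of `{Φ ≤ 1}`. -/
noncomputable def tnormZ {X : Type*} [NormedAddCommGroup X] [NormedSpace ℝ X]
    (z : X × (ℕ → ℝ)) : ℝ :=
  sInf {l : ℝ | 0 < l ∧ PhiZ (l⁻¹ • z) ≤ 1}

section helpers
variable {X : Type*} [NormedAddCommGroup X] [NormedSpace ℝ X]

lemma phi_smul_eq (z : X × (ℕ → ℝ)) (t : ℝ) :
    PhiZ (t • z) = |t| * ‖z.1‖ + ∑' n : ℕ, (t * z.2 n) ^ (2 * (n + 1)) := by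
  simp [PhiZ, norm_smul, Real.norm_eq_abs, Prod.smul_fst, Prod.smul_snd, Pi.smul_apply,
    smul_eq_mul]

lemma phi_smul_contAt {z : X × (ℕ → ℝ)} (hz : IsC0Seq z.2) (t₀ : ℝ) :
    ContinuousAt (fun t : ℝ => PhiZ (t • z)) t₀ := by
  have : (fun t : ℝ => PhiZ (t • z))
      = fun t => |t| * ‖z.1‖ + ∑' n : ℕ, (t * z.2 n) ^ (2 * (n + 1)) := by
    funext t; exact phi_smul_eq z t
  rw [this]
  exact ((continuous_abs.continuousAt).mul continuousAt_const).add (c0_tsum_cont hz t₀)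

lemma phi_smul_le {z : X × (ℕ → ℝ)} (hz : IsC0Seq z.2) {t : ℝ} (ht0 : 0 ≤ t) (ht1 : t ≤ 1) :
    PhiZ (t • z) ≤ PhiZ z := by
  rw [phi_smul_eq]
  have h1 : |t| * ‖z.1‖ ≤ ‖z.1‖ := by
    rw [abs_of_nonneg ht0]
    nlinarith [norm_nonneg z.1]
  have h2 : ∑' n : ℕ, (t * z.2 n) ^ (2 * (n + 1)) ≤ ∑' n : ℕ, (z.2 n) ^ (2 * (n + 1)) := by
    refine Summable.tsum_le_tsum (fun n => ?_) (c0_summable (c0_const_mul hz t)) (c0_summable hz)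
    have : (t * z.2 n) ^ (2 * (n + 1)) = t ^ (2 * (n + 1)) * (z.2 n) ^ (2 * (n + 1)) :=
      mul_pow t _ _
    rw [this]
    have hp : (z.2 n) ^ (2 * (n + 1)) = ((z.2 n) ^ (n+1)) ^ 2 := by ring
    have hz2 : (0:ℝ) ≤ (z.2 n) ^ (2 * (n + 1)) := by rw [hp]; positivity
    nlinarith [pow_le_one₀ ht0 ht1 (n := 2 * (n+1)), pow_nonneg ht0 (2*(n+1))]
  unfold PhiZ
  linarith

lemma phi_term_nonneg (a : ℝ) (n : ℕ) : (0:ℝ) ≤ a ^ (2 * (n + 1)) := by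
  have : a ^ (2 * (n + 1)) = (a ^ (n+1)) ^ 2 := by ring
  rw [this]; positivity

lemma phi_nonneg (z : X × (ℕ → ℝ)) (hz : IsC0Seq z.2) : 0 ≤ PhiZ z := by
  have : (0:ℝ) ≤ ∑' n : ℕ, (z.2 n) ^ (2 * (n + 1)) := tsum_nonneg (fun n => phi_term_nonneg (z.2 n) n)
  unfold PhiZ
  nlinarith [norm_nonneg z.1]

end helpers

section tnorm
variable {X : Type*} [NormedAddCommGroup X] [NormedSpace ℝ X]

lemma tnorm_mem_upclosed {z : X × (ℕ → ℝ)} (hz : IsC0Seq z.2) {l l' : ℝ}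
    (hl : l ∈ {l : ℝ | 0 < l ∧ PhiZ (l⁻¹ • z) ≤ 1}) (hll' : l ≤ l') :
    l' ∈ {l : ℝ | 0 < l ∧ PhiZ (l⁻¹ • z) ≤ 1} := by
  obtain ⟨hl0, hlP⟩ := hl
  have hl'0 : 0 < l' := lt_of_lt_of_le hl0 hll'
  refine ⟨hl'0, ?_⟩
  have key : l'⁻¹ • z = (l / l') • (l⁻¹ • z) := by
    rw [smul_smul]
    congr 1
    field_simp
  rw [key]
  refine le_trans (phi_smul_le ?_ ?_ ?_) hlP
  · exact c0_const_mul hz l⁻¹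
  · positivity
  · rw [div_le_one hl'0]; exact hll'

lemma tnorm_mem_of_gt {z : X × (ℕ → ℝ)} (hz : IsC0Seq z.2) {c : ℝ} (hc : 0 < c)
    (h : tnormZ z = c) {l : ℝ} (hl : c < l) :
    l ∈ {l : ℝ | 0 < l ∧ PhiZ (l⁻¹ • z) ≤ 1} := by
  set S := {l : ℝ | 0 < l ∧ PhiZ (l⁻¹ • z) ≤ 1} with hS
  have hne : S.Nonempty := by
    by_contra hemp
    rw [Set.not_nonempty_iff_eq_empty] at hemp
    rw [tnormZ, ← hS, hemp, Real.sInf_empty] at h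
    linarith
  have hex : ∃ μ ∈ S, μ < l := by
    by_contra hcon
    push_neg at hcon
    have : l ≤ sInf S := le_csInf hne (fun μ hμ => hcon μ hμ)
    rw [tnormZ, ← hS] at h
    linarith
  obtain ⟨μ, hμS, hμl⟩ := hex
  exact tnorm_mem_upclosed hz hμS (le_of_lt hμl)

lemma tnorm_phi_le {z : X × (ℕ → ℝ)} (hz : IsC0Seq z.2) {c : ℝ} (hc : 0 < c)
    (h : tnormZ z = c) : PhiZ (c⁻¹ • z) ≤ 1 := by
  set f : ℝ → ℝ := fun t => PhiZ (t • z) with hf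
  have hcont : ContinuousAt f c⁻¹ := phi_smul_contAt hz c⁻¹
  have htend : Tendsto f (nhdsWithin c⁻¹ (Set.Iio c⁻¹)) (nhds (f c⁻¹)) :=
    hcont.continuousWithinAt.tendsto
  have hev : ∀ᶠ t in nhdsWithin c⁻¹ (Set.Iio c⁻¹), f t ≤ 1 := by
    have hpos : ∀ᶠ t in nhdsWithin c⁻¹ (Set.Iio c⁻¹), (0:ℝ) < t := by
      refine eventually_nhdsWithin_of_eventually_nhds ?_
      exact eventually_gt_nhds (by positivity)
    filter_upwards [hpos, self_mem_nhdsWithin] with t ht0 htlt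
    have hlt : t < c⁻¹ := htlt
    have hcl : c < t⁻¹ := by
      have hct : c * t < 1 := by
        have := mul_lt_mul_of_pos_left hlt hc
        rwa [mul_inv_cancel₀ hc.ne'] at this
      rw [inv_eq_one_div, lt_div_iff₀ ht0]
      linarith
    have := tnorm_mem_of_gt hz hc h hcl
    have h2 := this.2
    rw [inv_inv] at h2
    exact h2
  exact le_of_tendsto htend hev

lemma tnorm_phi_ge {z : X × (ℕ → ℝ)} (hz : IsC0Seq z.2) {c : ℝ} (hc : 0 < c)
    (h : tnormZ z = c) : 1 ≤ PhiZ (c⁻¹ • z) := by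
  by_contra hcon
  push_neg at hcon
  set f : ℝ → ℝ := fun t => PhiZ (t • z) with hf
  have hcont : ContinuousAt f c⁻¹ := phi_smul_contAt hz c⁻¹
  have hev : ∀ᶠ t in nhdsWithin c⁻¹ (Set.Ioi c⁻¹), f t < 1 := by
    refine eventually_nhdsWithin_of_eventually_nhds ?_
    exact hcont.eventually_lt_const hcon
  obtain ⟨t, htf, htgt⟩ := (hev.and self_mem_nhdsWithin).exists
  have ht0 : (0:ℝ) < t := lt_trans (by positivity) htgt
  have hlt : t⁻¹ < c := by
    have hct : 1 < c * t := by
      have := mul_lt_mul_of_pos_left htgt hc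
      rwa [mul_inv_cancel₀ hc.ne'] at this
    rw [inv_eq_one_div, div_lt_iff₀ ht0]
    linarith
  have hmem : t⁻¹ ∈ {l : ℝ | 0 < l ∧ PhiZ (l⁻¹ • z) ≤ 1} := by
    refine ⟨by positivity, ?_⟩
    rw [inv_inv]
    exact le_of_lt htf
  have hbdd : BddBelow {l : ℝ | 0 < l ∧ PhiZ (l⁻¹ • z) ≤ 1} :=
    ⟨0, fun x hx => le_of_lt hx.1⟩
  have : tnormZ z ≤ t⁻¹ := csInf_le hbdd hmem
  linarith

lemma even_pow_midpoint (a b : ℝ) (n : ℕ) :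
    ((2:ℝ)⁻¹ * (a + b)) ^ (2 * (n + 1)) ≤ (a ^ (2 * (n + 1)) + b ^ (2 * (n + 1))) / 2 := by
  have h := (Even.convexOn_pow (even_two_mul (n+1))).2 (Set.mem_univ a) (Set.mem_univ b)
    (by norm_num : (0:ℝ) ≤ 1/2) (by norm_num : (0:ℝ) ≤ 1/2) (by norm_num : (1/2:ℝ) + 1/2 = 1)
  simp only [smul_eq_mul] at h
  calc ((2:ℝ)⁻¹ * (a + b)) ^ (2 * (n + 1))
      = ((1/2:ℝ) * a + (1/2:ℝ) * b) ^ (2 * (n + 1)) := by ring_nf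
    _ ≤ (1/2:ℝ) * a ^ (2 * (n + 1)) + (1/2:ℝ) * b ^ (2 * (n + 1)) := h
    _ = (a ^ (2 * (n + 1)) + b ^ (2 * (n + 1))) / 2 := by ring

lemma even_pow_midpoint_eq {a b : ℝ} {n : ℕ}
    (h : ((2:ℝ)⁻¹ * (a + b)) ^ (2 * (n + 1)) = (a ^ (2 * (n + 1)) + b ^ (2 * (n + 1))) / 2) :
    a = b := by
  by_contra hne
  have hs := (Even.strictConvexOn_pow (even_two_mul (n+1)) (by omega)).2 (Set.mem_univ a)
    (Set.mem_univ b) hne (by norm_num : (0:ℝ) < 1/2) (by norm_num : (0:ℝ) < 1/2)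
    (by norm_num : (1/2:ℝ) + 1/2 = 1)
  simp only [smul_eq_mul] at hs
  have he1 : ((1/2:ℝ) * a + (1/2:ℝ) * b) = (2:ℝ)⁻¹ * (a + b) := by ring
  rw [he1, h] at hs
  linarith

end tnorm

/-- If `X` is strictly convex, then the norm `|||·|||` on `Z = X × c₀(ℕ)` is strictly
convex. -/
theorem tnormZ_strictly_convex
    {X : Type*} [NormedAddCommGroup X] [NormedSpace ℝ X] [CompleteSpace X]
    (hX : ∀ x y : X, ‖x‖ = 1 → ‖y‖ = 1 → ‖x + y‖ = 2 → x = y)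
    (z w : X × (ℕ → ℝ)) (hz : IsC0Seq z.2) (hw : IsC0Seq w.2)
    (hz1 : tnormZ z = 1) (hw1 : tnormZ w = 1) (hzw : tnormZ (z + w) = 2) :
    z = w := by
  have hu : IsC0Seq (z + w).2 := c0_add hz hw
  -- Φ(z) ≤ 1, Φ(w) ≤ 1
  have hΦz : PhiZ z ≤ 1 := by
    have := tnorm_phi_le hz one_pos hz1
    simpa using this
  have hΦw : PhiZ w ≤ 1 := by
    have := tnorm_phi_le hw one_pos hw1
    simpa using this
  -- midpoint
  set m : X × (ℕ → ℝ) := (2:ℝ)⁻¹ • (z + w) with hm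
  have hge : 1 ≤ PhiZ m := tnorm_phi_ge hu two_pos hzw
  -- components
  have hm1 : m.1 = (2:ℝ)⁻¹ • (z.1 + w.1) := rfl
  have hm2 : ∀ n, m.2 n = (2:ℝ)⁻¹ * (z.2 n + w.2 n) := fun n => rfl
  have hmc : IsC0Seq m.2 := by
    have : IsC0Seq fun n => (2:ℝ)⁻¹ * (z.2 n + w.2 n) := c0_const_mul (c0_add hz hw) _
    exact this
  -- norm part inequality
  have hn1 : ‖m.1‖ ≤ (‖z.1‖ + ‖w.1‖) / 2 := by
    rw [hm1, norm_smul]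
    have := norm_add_le z.1 w.1
    simp only [norm_inv, Real.norm_ofNat]
    rw [inv_eq_one_div]
    linarith
  -- series part inequality
  have hsz := c0_summable hz
  have hsw := c0_summable hw
  have hsm := c0_summable hmc
  have hsum2 : Summable fun n => ((z.2 n) ^ (2 * (n + 1)) + (w.2 n) ^ (2 * (n + 1))) / 2 := by
    exact (hsz.add hsw).div_const 2
  have hterm : ∀ n, (m.2 n) ^ (2 * (n + 1))
      ≤ ((z.2 n) ^ (2 * (n + 1)) + (w.2 n) ^ (2 * (n + 1))) / 2 := by
    intro n
    rw [hm2 n]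
    exact even_pow_midpoint _ _ n
  have hn2 : (∑' n, (m.2 n) ^ (2 * (n + 1)))
      ≤ ∑' n, ((z.2 n) ^ (2 * (n + 1)) + (w.2 n) ^ (2 * (n + 1))) / 2 :=
    Summable.tsum_le_tsum hterm hsm hsum2
  have hsplit : (∑' n, ((z.2 n) ^ (2 * (n + 1)) + (w.2 n) ^ (2 * (n + 1))) / 2)
      = ((∑' n, (z.2 n) ^ (2 * (n + 1))) + ∑' n, (w.2 n) ^ (2 * (n + 1))) / 2 := by
    rw [tsum_div_const, Summable.tsum_add hsz hsw]
  -- equality chain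
  have hconv : PhiZ m ≤ (PhiZ z + PhiZ w) / 2 := by
    unfold PhiZ
    rw [hsplit] at hn2
    linarith
  have hΦzeq : PhiZ z = 1 := by
    have h0w := phi_nonneg w hw
    have h0z := phi_nonneg z hz
    linarith
  have hΦweq : PhiZ w = 1 := by linarith
  have hΦmeq : PhiZ m = 1 := by linarith
  -- both partial inequalities are equalities
  have heq1 : ‖m.1‖ = (‖z.1‖ + ‖w.1‖) / 2 := by
    unfold PhiZ at hΦzeq hΦweq hΦmeq
    rw [hsplit] at hn2
    linarith
  have heq2 : (∑' n, (m.2 n) ^ (2 * (n + 1)))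
      = ∑' n, ((z.2 n) ^ (2 * (n + 1)) + (w.2 n) ^ (2 * (n + 1))) / 2 := by
    unfold PhiZ at hΦzeq hΦweq hΦmeq
    rw [hsplit]
    linarith
  -- termwise equality in the series
  have hterm_eq : ∀ n, (m.2 n) ^ (2 * (n + 1))
      = ((z.2 n) ^ (2 * (n + 1)) + (w.2 n) ^ (2 * (n + 1))) / 2 := by
    intro n
    by_contra hne
    have hlt : (m.2 n) ^ (2 * (n + 1))
        < ((z.2 n) ^ (2 * (n + 1)) + (w.2 n) ^ (2 * (n + 1))) / 2 :=
      lt_of_le_of_ne (hterm n) hne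
    have : (∑' n, (m.2 n) ^ (2 * (n + 1)))
        < ∑' n, ((z.2 n) ^ (2 * (n + 1)) + (w.2 n) ^ (2 * (n + 1))) / 2 :=
      Summable.tsum_lt_tsum_of_nonneg (fun b => phi_term_nonneg _ b) hterm hlt hsum2
    linarith [heq2]
  -- second components coincide
  have hy : z.2 = w.2 := by
    funext n
    have := hterm_eq n
    rw [hm2 n] at this
    exact even_pow_midpoint_eq this
  -- series equal, hence norms equal
  have hSeq : (∑' n, (z.2 n) ^ (2 * (n + 1))) = ∑' n, (w.2 n) ^ (2 * (n + 1)) := by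
    rw [hy]
  have hAB : ‖z.1‖ = ‖w.1‖ := by
    unfold PhiZ at hΦzeq hΦweq
    linarith
  -- norm of the sum
  have hnormsum : ‖z.1 + w.1‖ = 2 * ‖z.1‖ := by
    rw [hm1, norm_smul] at heq1
    simp only [norm_inv, Real.norm_ofNat] at heq1
    rw [← hAB] at heq1
    nlinarith [heq1]
  have hx : z.1 = w.1 := by
    rcases eq_or_lt_of_le (norm_nonneg z.1) with h0 | hpos
    · have hz0 : z.1 = 0 := norm_eq_zero.mp h0.symm
      have hw0 : w.1 = 0 := norm_eq_zero.mp (by rw [← hAB]; exact h0.symm)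
      rw [hz0, hw0]
    · have hA0 : ‖z.1‖ ≠ 0 := ne_of_gt hpos
      have h1 : ‖‖z.1‖⁻¹ • z.1‖ = 1 := by
        rw [norm_smul, Real.norm_eq_abs, abs_of_pos (by positivity)]
        field_simp
      have h2 : ‖‖z.1‖⁻¹ • w.1‖ = 1 := by
        rw [norm_smul, Real.norm_eq_abs, abs_of_pos (by positivity), ← hAB]
        field_simp
      have h3 : ‖‖z.1‖⁻¹ • z.1 + ‖z.1‖⁻¹ • w.1‖ = 2 := by
        rw [← smul_add, norm_smul, Real.norm_eq_abs, abs_of_pos (by positivity), hnormsum]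
        field_simp
      have h4 := hX _ _ h1 h2 h3
      have h5 := congrArg (fun v => ‖z.1‖ • v) h4
      simpa [smul_smul, mul_inv_cancel₀ hA0] using h5
  exact Prod.ext hx hy
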